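/- Let n be a non-negative integer and d = 2^n. There exist functions β_i, γ_i : ℝ^d × ℝ^d × ℝ^{i−1} → ℝ for i = 1, …, d (β_i and γ_i depend only on b, c and the first i−1 coordinates of x) such that for all b, c, x ∈ ℝ^d, the componentwise inequality b ≤ A_n x ≤ c holds if and only if β_i(b, c, (x_1, …, x_{i−1})) ≤ x_i ≤ γ_i(b, c, (x_1, …, x_{i−1})) for every i = 1, …, d. -/
import Mathlib


/-- σ(n,k) from the paper: σ(0,1)=1 and, with d = 2^n, σ(n+1,k)=σ(n,k) for 1 ≤ k ≤ d,
σ(n+1,k)=2d+1−σ(n,k−d) for d+1 ≤ k ≤ 2d. -/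
def sigmaCF : ℕ → ℕ → ℤ
  | 0, _ => 1
  | n + 1, k => if k ≤ 2 ^ n then sigmaCF n k else 2 * 2 ^ n + 1 - sigmaCF n (k - 2 ^ n)

/-- ξ_{n,k} = 2 cos(π(2σ(n,k) − 1)/2^{n+1}). -/
noncomputable def xiCF (n k : ℕ) : ℝ :=
  2 * Real.cos (Real.pi * (2 * (sigmaCF n k : ℝ) - 1) / 2 ^ (n + 1))

/-- D_n = diag(ξ_{n+1,1}, …, ξ_{n+1,2^n}). -/
noncomputable def DCF (n : ℕ) : Matrix (Fin (2 ^ n)) (Fin (2 ^ n)) ℝ :=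
  Matrix.diagonal fun i => xiCF (n + 1) (i.val + 1)

/-- A_0 = (1), A_{n+1} = [[A_n, D_n A_n], [A_n, −D_n A_n]]. -/
noncomputable def ACF : (n : ℕ) → Matrix (Fin (2 ^ n)) (Fin (2 ^ n)) ℝ
  | 0 => 1
  | n + 1 =>
    Matrix.reindex (finSumFinEquiv.trans (finCongr (by rw [pow_succ, mul_two])))
      (finSumFinEquiv.trans (finCongr (by rw [pow_succ, mul_two])))
      (Matrix.fromBlocks (ACF n) (DCF n * ACF n) (ACF n) (-(DCF n * ACF n)))

lemma xiCF_ne_zero (n k : ℕ) : xiCF (n + 1) k ≠ 0 := by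
  unfold xiCF
  intro h
  have hc : Real.cos (Real.pi * (2 * (sigmaCF (n + 1) k : ℝ) - 1) / 2 ^ (n + 2)) = 0 := by
    linarith [h]
  rw [Real.cos_eq_zero_iff] at hc
  obtain ⟨m, hm⟩ := hc
  have hπ := Real.pi_ne_zero
  have h2 : ((2 : ℝ) ^ (n + 2)) ≠ 0 := by positivity
  have : ((2 * (sigmaCF (n + 1) k) - 1 : ℤ) : ℝ) * 2 = ((2 * m + 1) * 2 ^ (n + 2) : ℤ) := by
    push_cast
    field_simp at hm
    nlinarith [hm, Real.pi_pos]
  have hz : (2 * (sigmaCF (n + 1) k) - 1) * 2 = (2 * m + 1) * 2 ^ (n + 2) := by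
    exact_mod_cast this
  have h4 : (4 : ℤ) ∣ (2 * m + 1) * 2 ^ (n + 2) := by
    refine Dvd.dvd.mul_left ?_ _
    have : (2 : ℤ) ^ (n + 2) = 4 * 2 ^ n := by ring
    rw [this]; exact Dvd.intro _ rfl
  rw [← hz] at h4
  omega

lemma ACF_det_isUnit (n : ℕ) : IsUnit (ACF n).det := by
  induction n with
  | zero => simp [ACF]
  | succ n ih =>
    rw [ACF, Matrix.det_reindex_self]
    have hsplit : Matrix.fromBlocks (ACF n) (DCF n * ACF n) (ACF n) (-(DCF n * ACF n)) =
        Matrix.fromBlocks 1 (DCF n) 1 (-(DCF n)) *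
          Matrix.fromBlocks (ACF n) 0 0 (ACF n) := by
      rw [Matrix.fromBlocks_multiply]
      simp [Matrix.neg_mul]
    rw [hsplit, Matrix.det_mul, Matrix.det_fromBlocks_one₁₁, Matrix.det_fromBlocks_zero₂₁]
    refine ((?_ : IsUnit _).mul (ih.mul ih))
    have : -DCF n - 1 * DCF n = Matrix.diagonal fun i : Fin (2 ^ n) =>
        -2 * xiCF (n + 1) (i.val + 1) := by
      ext i j
      rcases eq_or_ne i j with rfl | hij
      · simp [DCF, Matrix.sub_apply, Matrix.neg_apply, Matrix.one_mul,
          Matrix.diagonal_apply_eq]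
        ring
      · simp [DCF, Matrix.sub_apply, Matrix.neg_apply, Matrix.one_mul,
          Matrix.diagonal_apply_ne _ hij]
    rw [this, Matrix.det_diagonal, isUnit_iff_ne_zero, Finset.prod_ne_zero_iff]
    intro i _
    have := xiCF_ne_zero n (i.val + 1)
    intro hcon
    apply this
    nlinarith [hcon]


theorem key {d : ℕ} (hd : 0 < d) (M : Matrix (Fin d) (Fin d) ℝ) (hM : IsUnit M.det) :
    ∃ β γ : (Fin d → ℝ) → (Fin d → ℝ) →
        (i : Fin d) → (Fin (i : ℕ) → ℝ) → ℝ,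
      ∀ b c x : Fin d → ℝ,
        (b ≤ M.mulVec x ∧ M.mulVec x ≤ c) ↔
          ∀ i : Fin d,
            β b c i (fun j => x ⟨(j : ℕ), j.isLt.trans i.isLt⟩) ≤ x i ∧
            x i ≤ γ b c i (fun j => x ⟨(j : ℕ), j.isLt.trans i.isLt⟩) := by
  classical
  set S : (Fin d → ℝ) → (Fin d → ℝ) → Set (Fin d → ℝ) :=
    fun b c => {x | b ≤ M.mulVec x ∧ M.mulVec x ≤ c} with hSdef
  set E : (Fin d → ℝ) → (Fin d → ℝ) → (i : Fin d) → (Fin (i : ℕ) → ℝ) → Set ℝ :=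
    fun b c i p => (fun x => x i) ''
      (S b c ∩ {x | ∀ j : Fin (i : ℕ), x ⟨(j : ℕ), j.isLt.trans i.isLt⟩ = p j}) with hEdef
  -- continuity of mulVec
  have hcont : ∀ N : Matrix (Fin d) (Fin d) ℝ, Continuous fun y => N.mulVec y := by
    intro N
    have := N.mulVecLin.continuous_of_finiteDimensional
    simpa [Matrix.coe_mulVecLin] using this
  -- S is compact
  have hScompact : ∀ b c, IsCompact (S b c) := by
    intro b c
    have hSim : S b c = (fun y => (M⁻¹).mulVec y) '' Set.Icc b c := by
      ext x
      constructor
      · rintro ⟨h1, h2⟩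
        exact ⟨M.mulVec x, ⟨h1, h2⟩, by
          show M⁻¹.mulVec (M.mulVec x) = x
          rw [Matrix.mulVec_mulVec, Matrix.nonsing_inv_mul M hM, Matrix.one_mulVec]⟩
      · rintro ⟨y, hy, rfl⟩
        rw [Set.mem_Icc] at hy
        have hMy : M.mulVec (M⁻¹.mulVec y) = y := by
          rw [Matrix.mulVec_mulVec, Matrix.mul_nonsing_inv M hM, Matrix.one_mulVec]
        constructor
        · show b ≤ M.mulVec (M⁻¹.mulVec y)
          rw [hMy]; exact hy.1
        · show M.mulVec (M⁻¹.mulVec y) ≤ c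
          rw [hMy]; exact hy.2
    rw [hSim]
    exact isCompact_Icc.image (hcont _)
  -- S is convex
  have hSconvex : ∀ b c, Convex ℝ (S b c) := by
    intro b c x hx y hy a a' ha ha' haa
    constructor <;> intro k <;>
      rw [Matrix.mulVec_add, Matrix.mulVec_smul, Matrix.mulVec_smul]
    · have h1 := hx.1 k; have h2 := hy.1 k
      simp only [Pi.add_apply, Pi.smul_apply, smul_eq_mul]
      have key : a * b k + a' * b k = b k := by rw [← add_mul, haa, one_mul]
      nlinarith [mul_le_mul_of_nonneg_left h1 ha, mul_le_mul_of_nonneg_left h2 ha']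
    · have h1 := hx.2 k; have h2 := hy.2 k
      simp only [Pi.add_apply, Pi.smul_apply, smul_eq_mul]
      have key : a * c k + a' * c k = c k := by rw [← add_mul, haa, one_mul]
      nlinarith [mul_le_mul_of_nonneg_left h1 ha, mul_le_mul_of_nonneg_left h2 ha']
  -- V closed
  have hVclosed : ∀ (i : Fin d) (p : Fin (i : ℕ) → ℝ),
      IsClosed {x : Fin d → ℝ | ∀ j : Fin (i : ℕ), x ⟨(j : ℕ), j.isLt.trans i.isLt⟩ = p j} := by
    intro i p
    rw [Set.setOf_forall]
    exact isClosed_iInter fun j => isClosed_eq (continuous_apply _) continuous_const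
  -- V convex
  have hVconvex : ∀ (i : Fin d) (p : Fin (i : ℕ) → ℝ),
      Convex ℝ {x : Fin d → ℝ | ∀ j : Fin (i : ℕ), x ⟨(j : ℕ), j.isLt.trans i.isLt⟩ = p j} := by
    intro i p x hx y hy a a' ha ha' haa j
    simp only [Set.mem_setOf_eq] at hx hy
    simp only [Pi.add_apply, Pi.smul_apply, smul_eq_mul, hx j, hy j]
    rw [← add_mul, haa, one_mul]
  have hEcompact : ∀ b c i p, IsCompact (E b c i p) := fun b c i p =>
    ((hScompact b c).inter_right (hVclosed i p)).image (continuous_apply _)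
  have hEconvex : ∀ b c i p, Convex ℝ (E b c i p) := fun b c i p =>
    ((hSconvex b c).inter (hVconvex i p)).linear_image (LinearMap.proj i)
  refine ⟨fun b c i p => if h : (E b c i p).Nonempty then sInf (E b c i p) else 1,
          fun b c i p => if h : (E b c i p).Nonempty then sSup (E b c i p) else 0, ?_⟩
  intro b c x
  constructor
  · intro hx i
    have hmem : x i ∈ E b c i (fun j => x ⟨(j : ℕ), j.isLt.trans i.isLt⟩) :=
      ⟨x, ⟨hx, fun j => rfl⟩, rfl⟩
    have hne : (E b c i (fun j => x ⟨(j : ℕ), j.isLt.trans i.isLt⟩)).Nonempty := ⟨_, hmem⟩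
    simp only [dif_pos hne]
    exact ⟨csInf_le (hEcompact b c i _).bddBelow hmem,
           le_csSup (hEcompact b c i _).bddAbove hmem⟩
  · intro h
    set i : Fin d := ⟨d - 1, by omega⟩ with hi
    obtain ⟨h1, h2⟩ := h i
    set p : Fin (i : ℕ) → ℝ := fun j => x ⟨(j : ℕ), j.isLt.trans i.isLt⟩ with hp
    have hne : (E b c i p).Nonempty := by
      by_contra hne
      simp only [dif_neg hne] at h1 h2
      linarith
    simp only [dif_pos hne] at h1 h2
    have hxi : x i ∈ E b c i p := by
      have h3 := (hEcompact b c i p).sInf_mem hne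
      have h4 := (hEcompact b c i p).sSup_mem hne
      exact (hEconvex b c i p).ordConnected.out h3 h4 ⟨h1, h2⟩
    obtain ⟨z, ⟨hzS, hzV⟩, hzi⟩ := hxi
    have hxz : x = z := by
      funext j
      rcases lt_or_eq_of_le (Nat.lt_succ_iff.mp (by omega : (j : ℕ) < (d - 1) + 1)) with hj | hj
      · exact (hzV ⟨(j : ℕ), hj⟩).symm
      · have : j = i := Fin.ext hj
        rw [this]; exact hzi.symm
    rw [hxz]; exact hzS

/-- There exist functions `β_i, γ_i` of `b`, `c` and the first `i−1` coordinates of `x`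
such that `b ≤ A_n x ≤ c` (componentwise) holds iff
`β_i(b, c, (x_1, …, x_{i−1})) ≤ x_i ≤ γ_i(b, c, (x_1, …, x_{i−1}))` for every `i`. -/
theorem exists_sequential_bounds (n : ℕ) :
    ∃ β γ : (Fin (2 ^ n) → ℝ) → (Fin (2 ^ n) → ℝ) →
        (i : Fin (2 ^ n)) → (Fin (i : ℕ) → ℝ) → ℝ,
      ∀ b c x : Fin (2 ^ n) → ℝ,
        (b ≤ (ACF n).mulVec x ∧ (ACF n).mulVec x ≤ c) ↔
          ∀ i : Fin (2 ^ n),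
            β b c i (fun j => x ⟨(j : ℕ), j.isLt.trans i.isLt⟩) ≤ x i ∧
            x i ≤ γ b c i (fun j => x ⟨(j : ℕ), j.isLt.trans i.isLt⟩) :=
  key (pow_pos two_pos n) (ACF n) (ACF_det_isUnit n)
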